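/- Let E be a universally complete f-algebra whose multiplicative identity e is a weak order unit. Let (x_n)_{n≥1} be a sequence in E⁺ and set R_n = Σ_{i=1}^{n} x_i. Then for each n the element e + R_n has a multiplicative inverse (e + R_n)^{−1} in E with 0 ≤ (e + R_n)^{−1} ≤ e, the series Σ_{n=1}^{∞} x_n · (e + R_n)^{−2} converges in order in E, and Σ_{n=1}^{∞} x_n · (e + R_n)^{−2} ≤ e. -/

import Mathlib

/-- `E` is Dedekind complete: every nonempty subset bounded above has a supremum. -/
def DedekindComplete (E : Type*) [Lattice E] : Prop :=
  ∀ S : Set E, S.Nonempty → BddAbove S → ∃ s, IsLUB S s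

/-- `E` is laterally complete: every set of pairwise disjoint positive elements has a
supremum. -/
def LaterallyComplete (E : Type*) [Lattice E] [AddCommGroup E] : Prop :=
  ∀ S : Set E, (∀ x ∈ S, 0 ≤ x) → (S.Pairwise fun a b => a ⊓ b = 0) → ∃ s, IsLUB S s

/-- A sequence `(s_n)` in a vector lattice order converges to `l` if there is a sequence
`(y_m)` decreasing to `0` such that for every `m` there is `N` with `|s_n - l| ≤ y_m`
for all `n ≥ N`. -/
def OrderConvSeq {E : Type*} [Lattice E] [AddCommGroup E] (s : ℕ → E) (l : E) : Prop :=
  ∃ y : ℕ → E, Antitone y ∧ IsGLB (Set.range y) 0 ∧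
    ∀ m, ∃ N, ∀ n, N ≤ n → |s n - l| ≤ y m

set_option linter.unusedSectionVars false

section FAlgebraAux

variable {E : Type*} [Lattice E] [CommRing E] [Module ℝ E]
    [CovariantClass E E (· + ·) (· ≤ ·)]

private lemma fa_nsmul_mono {a b : E} (h : a ≤ b) (n : ℕ) : n • a ≤ n • b := by
  induction n with
  | zero => simp
  | succ k ih => rw [succ_nsmul, succ_nsmul]; exact add_le_add ih h

private lemma fa_nsmul_nonneg {a : E} (h : 0 ≤ a) (n : ℕ) : 0 ≤ n • a := by
  simpa using fa_nsmul_mono h n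

/-- Dedekind completeness implies the Archimedean property. -/
private lemma fa_arch (hDed : DedekindComplete E) {a b : E} (h : ∀ n : ℕ, n • a ≤ b) :
    a ≤ 0 := by
  obtain ⟨s, hs⟩ := hDed (Set.range fun n : ℕ => n • a) ⟨0 • a, ⟨0, rfl⟩⟩
    ⟨b, by rintro _ ⟨n, rfl⟩; exact h n⟩
  have h1 : s ≤ s - a := by
    apply hs.2
    rintro _ ⟨n, rfl⟩
    have h2 : (n + 1) • a ≤ s := hs.1 ⟨n + 1, rfl⟩
    rw [succ_nsmul] at h2
    exact le_sub_iff_add_le.2 h2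
  have h2 : a + s ≤ s := by
    have := add_le_add_left h1 a
    simpa using this
  exact add_le_iff_nonpos_left.1 h2

private lemma fa_isLUB_inf {S : Set E} {t : E} (c : E) (h : IsLUB S t) :
    IsLUB ((fun u => u ⊓ c) '' S) (t ⊓ c) := by
  constructor
  · rintro _ ⟨u, hu, rfl⟩
    exact inf_le_inf_right c (h.1 hu)
  · intro w hw
    have key : ∀ u ∈ S, u ≤ w + (t ⊔ c) - c := by
      intro u hu
      have h1 : u ⊓ c + (u ⊔ c) = u + c := inf_add_sup u c
      have h2 : u ⊓ c ≤ w := hw ⟨u, hu, rfl⟩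
      have h3 : u ⊔ c ≤ t ⊔ c := sup_le_sup_right (h.1 hu) c
      have h4 : u + c ≤ w + (t ⊔ c) := by rw [← h1]; exact add_le_add h2 h3
      exact le_sub_iff_add_le.2 h4
    have ht : t ≤ w + (t ⊔ c) - c := h.2 key
    have h5 : t + c ≤ w + (t ⊔ c) := le_sub_iff_add_le.1 ht
    have h6 : t ⊓ c + (t ⊔ c) = t + c := inf_add_sup t c
    have h7 : t ⊓ c + (t ⊔ c) ≤ w + (t ⊔ c) := by rw [h6]; exact h5
    exact le_of_add_le_add_right h7

private lemma fa_inf_add_le {u v b : E} (hu : 0 ≤ u) (hv : 0 ≤ v) (hb : 0 ≤ b) :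
    (u + v) ⊓ b ≤ u ⊓ b + v ⊓ b := by
  have h1 : (u + v) ⊓ b ≤ u ⊓ b + v := by
    have e1 : u ⊓ b + v = (u + v) ⊓ (b + v) := by
      rw [add_comm (u ⊓ b) v, add_inf]; rw [add_comm v u, add_comm v b]
    rw [e1]
    exact inf_le_inf_left _ (le_add_of_nonneg_right hv)
  have h2 : (u + v) ⊓ b ≤ u ⊓ b + b :=
    le_trans inf_le_right (le_add_of_nonneg_left (le_inf hu hb))
  have h3 : (u + v) ⊓ b ≤ (u ⊓ b + v) ⊓ (u ⊓ b + b) := le_inf h1 h2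
  rwa [← add_inf] at h3

private lemma fa_disj_nsmul {a b : E} (ha : 0 ≤ a) (hb : 0 ≤ b) (hab : a ⊓ b = 0)
    (n : ℕ) : (n • a) ⊓ b = 0 := by
  induction n with
  | zero => simpa using inf_eq_left.2 hb
  | succ k ih =>
    refine le_antisymm ?_ (le_inf (fa_nsmul_nonneg ha _) hb)
    rw [succ_nsmul]
    calc (k • a + a) ⊓ b ≤ (k • a) ⊓ b + a ⊓ b :=
          fa_inf_add_le (fa_nsmul_nonneg ha k) ha hb
    _ = 0 := by rw [ih, hab, add_zero]

private lemma fa_nonneg_of_nsmul {n : ℕ} (hn : n ≠ 0) {a : E} (h : 0 ≤ n • a) : 0 ≤ a := by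
  have hpn : a⁺ ⊓ a⁻ = 0 := posPart_inf_negPart_eq_zero a
  have h1 : (n • a⁺) ⊓ a⁻ = 0 := fa_disj_nsmul (posPart_nonneg a) (negPart_nonneg a) hpn n
  have h2 : (n • a⁻) ⊓ (n • a⁺) = 0 := by
    have := fa_disj_nsmul (negPart_nonneg a) (fa_nsmul_nonneg (posPart_nonneg a) n)
      (by rw [inf_comm]; exact h1) n
    exact this
  have hle : n • a⁻ ≤ n • a⁺ := by
    have e : n • a⁺ - n • a⁻ = n • a := by rw [← smul_sub, posPart_sub_negPart]
    have : 0 ≤ n • a⁺ - n • a⁻ := by rw [e]; exact h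
    exact sub_nonneg.1 this
  have hz : n • a⁻ = 0 := le_antisymm (by rw [← h2]; exact le_inf le_rfl hle)
    (fa_nsmul_nonneg (negPart_nonneg a) n)
  obtain ⟨k, rfl⟩ := Nat.exists_eq_succ_of_ne_zero hn
  have hneg : a⁻ ≤ 0 := by
    have h3 : a⁻ ≤ (k + 1) • a⁻ := by
      rw [succ_nsmul]
      exact le_add_of_nonneg_left (fa_nsmul_nonneg (negPart_nonneg a) k)
    rw [hz] at h3; exact h3
  have hneg0 : a⁻ = 0 := le_antisymm hneg (negPart_nonneg a)
  have := posPart_sub_negPart a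
  rw [hneg0, sub_zero] at this
  rw [← this]; exact posPart_nonneg a

private lemma fa_nsmul_le_cancel {n : ℕ} (hn : n ≠ 0) {a b : E} (h : n • a ≤ n • b) :
    a ≤ b := by
  have : 0 ≤ n • (b - a) := by rw [smul_sub]; exact sub_nonneg.2 h
  exact sub_nonneg.1 (fa_nonneg_of_nsmul hn this)

/-- disjoint positive elements have zero product -/
private lemma fa_mul_eq_zero (hf_alg : ∀ x y z : E, x ⊓ y = 0 → 0 ≤ z → (x * z) ⊓ y = 0)
    {a b : E} (ha : 0 ≤ a) (hb : 0 ≤ b) (hab : a ⊓ b = 0) : a * b = 0 := by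
  have h1 : (a * b) ⊓ b = 0 := hf_alg a b b hab hb
  have h2 : (b * a) ⊓ (a * b) = 0 := hf_alg b (a * b) a (by rw [inf_comm]; exact h1) ha
  rw [mul_comm, inf_idem] at h2
  exact h2

private lemma fa_mul_le (hmul_pos : ∀ x y : E, 0 ≤ x → 0 ≤ y → 0 ≤ x * y)
    {z a b : E} (hz : 0 ≤ z) (h : a ≤ b) : z * a ≤ z * b := by
  have := hmul_pos z (b - a) hz (sub_nonneg.2 h)
  rw [mul_sub] at this
  exact sub_nonneg.1 this

private lemma fa_mul_le_right (hmul_pos : ∀ x y : E, 0 ≤ x → 0 ≤ y → 0 ≤ x * y)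
    {z a b : E} (hz : 0 ≤ z) (h : a ≤ b) : a * z ≤ b * z := by
  rw [mul_comm a z, mul_comm b z]; exact fa_mul_le hmul_pos hz h

/-- If `t` decreases to `0` then any `c` below all `k • t N` is nonpositive. -/
private lemma fa_le_zero_of_le_nsmul {t : ℕ → E} (ht : Antitone t)
    (hglb : IsGLB (Set.range t) 0) {c : E} (k : ℕ) (h : ∀ N, c ≤ k • t N) : c ≤ 0 := by
  induction k generalizing c with
  | zero => simpa using h 0
  | succ k ih =>
    have key : ∀ M, c - t M ≤ 0 := by
      intro M
      apply ih
      intro N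
      have h1 : c ≤ (k + 1) • t (max M N) := h _
      rw [succ_nsmul] at h1
      have h2 : c - t M ≤ c - t (max M N) := sub_le_sub_left (ht (le_max_left M N)) c
      have h3 : c - t (max M N) ≤ k • t (max M N) := sub_le_iff_le_add.2 h1
      have h4 : k • t (max M N) ≤ k • t N := by
        have hle : t (max M N) ≤ t N := ht (le_max_right M N)
        have : k • t (max M N) - k • t N = k • (t (max M N) - t N) := by rw [smul_sub]
        have h5 : k • (t (max M N) - t N) ≤ 0 := by
          have := fa_nsmul_nonneg (a := t N - t (max M N)) (sub_nonneg.2 hle) k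
          rw [← neg_sub] at this
          rw [smul_neg] at this
          exact neg_nonneg.1 this
        exact sub_nonpos.1 (this ▸ h5)
      exact le_trans h2 (le_trans h3 h4)
    have hlb : c ∈ lowerBounds (Set.range t) := by
      rintro _ ⟨M, rfl⟩
      exact sub_nonpos.1 (key M)
    exact hglb.2 hlb

private lemma fa_glb_sub {s : ℕ → E} {w : E} (h : IsLUB (Set.range s) w) :
    IsGLB (Set.range fun K => w - s K) 0 := by
  constructor
  · rintro _ ⟨K, rfl⟩
    exact sub_nonneg.2 (h.1 ⟨K, rfl⟩)
  · intro c hc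
    have h1 : ∀ K, s K ≤ w - c := by
      intro K
      have := hc ⟨K, rfl⟩
      exact le_sub_comm.1 this
    have hw : w ≤ w - c := h.2 (by rintro _ ⟨K, rfl⟩; exact h1 K)
    have h2 : w + c ≤ w := le_sub_iff_add_le.1 hw
    exact (add_le_iff_nonpos_right w).1 h2

/-- e = 1 weak unit: the truncation remainders `z - z ⊓ n•1` decrease to `0`. -/
private lemma fa_glb_trunc (hDed : DedekindComplete E) (h1_pos : (0:E) ≤ 1)
    (h1_unit : ∀ x : E, 0 ≤ x → x ⊓ 1 = 0 → x = 0) {z : E} (hz : 0 ≤ z) :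
    IsGLB (Set.range fun n : ℕ => z - z ⊓ (n • (1 : E))) 0 := by
  constructor
  · rintro _ ⟨n, rfl⟩
    exact sub_nonneg.2 inf_le_left
  · intro d hd
    set h : E := (d ⊔ 0) ⊓ 1 with hh
    have hd' : ∀ n : ℕ, d ⊔ 0 ≤ z - z ⊓ (n • (1:E)) := fun n =>
      sup_le (hd ⟨n, rfl⟩) (sub_nonneg.2 inf_le_left)
    have hstep : ∀ n : ℕ, n • h ≤ z ⊓ (n • (1:E)) := by
      intro n
      induction n with
      | zero => simp [inf_eq_right.2 hz]
      | succ k ih =>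
        have hle1 : h ≤ z - z ⊓ (k • (1:E)) := le_trans inf_le_left (hd' k)
        rw [succ_nsmul, succ_nsmul]
        have s1 : k • h + h ≤ z ⊓ (k • (1:E)) + h := add_le_add_left ih h
        have s2 : z ⊓ (k • (1:E)) + h ≤ z ⊓ (k • (1:E) + 1) := by
          refine le_inf ?_ ?_
          · calc z ⊓ (k • (1:E)) + h ≤ z ⊓ (k • (1:E)) + (z - z ⊓ (k • (1:E))) :=
                add_le_add_right hle1 _
            _ = z := by ring
          · exact add_le_add inf_le_right inf_le_right
        exact le_trans s1 s2
    have hzh : ∀ n : ℕ, n • h ≤ z := fun n => le_trans (hstep n) inf_le_left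
    have hh0 : h ≤ 0 := fa_arch hDed hzh
    have hhnn : 0 ≤ h := le_inf le_sup_right h1_pos
    have : (d ⊔ 0) = 0 := h1_unit _ le_sup_right (le_antisymm hh0 hhnn)
    calc d ≤ d ⊔ 0 := le_sup_left
    _ = 0 := this

private lemma fa_sum_nonneg {ι : Type*} {s : Finset ι} {f : ι → E} (h : ∀ i ∈ s, 0 ≤ f i) :
    0 ≤ ∑ i ∈ s, f i := by
  classical
  induction s using Finset.induction_on with
  | empty => simp
  | insert a s hnotmem ih =>
    rw [Finset.sum_insert hnotmem]
    have := add_le_add (h _ (Finset.mem_insert_self _ _))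
      (ih fun i hi => h i (Finset.mem_insert_of_mem hi))
    simpa using this

private lemma fa_sum_le_sum {f g : ℕ → E} (M : ℕ) (h : ∀ K, K < M → f K ≤ g K) :
    ∑ K ∈ Finset.range M, f K ≤ ∑ K ∈ Finset.range M, g K := by
  induction M with
  | zero => simp
  | succ m ih =>
    rw [Finset.sum_range_succ, Finset.sum_range_succ]
    exact add_le_add (ih fun K hK => h K (by omega)) (h m (by omega))

private lemma fa_nsmul_le_sum {f : ℕ → E} {b : E} (M : ℕ) (h : ∀ K, K < M → b ≤ f K) :
    M • b ≤ ∑ K ∈ Finset.range M, f K := by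
  induction M with
  | zero => simp
  | succ m ih =>
    rw [Finset.sum_range_succ, succ_nsmul]
    exact add_le_add (ih fun K hK => h K (by omega)) (h m (by omega))

/-- band absorption: if `q` is a component of `1` and `0 ≤ w ≤ q` then `q * w = w`. -/
private lemma fa_absorb (hmul_pos : ∀ x y : E, 0 ≤ x → 0 ≤ y → 0 ≤ x * y)
    (hf_alg : ∀ x y z : E, x ⊓ y = 0 → 0 ≤ z → (x * z) ⊓ y = 0)
    {q w : E} (hq1 : q ≤ 1) (hqc : q ⊓ (1 - q) = 0)
    (hw0 : 0 ≤ w) (hwq : w ≤ q) : q * w = w := by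
  have h1q : 0 ≤ 1 - q := sub_nonneg.2 hq1
  have hwinf : w ⊓ (1 - q) = 0 :=
    le_antisymm (le_trans (inf_le_inf_right _ hwq) hqc.le) (le_inf hw0 h1q)
  have hz : w * (1 - q) = 0 := fa_mul_eq_zero hf_alg hw0 h1q hwinf
  have : w - w * q = 0 := by rw [← hz]; ring
  have h2 : w * q = w := by
    have := sub_eq_zero.1 this
    exact this.symm
  rw [mul_comm]; exact h2

/-- inversion of `x` on a band piece `q` where `q ≤ x*q ≤ n•q`. -/
private lemma fa_piece_inv (hmul_pos : ∀ x y : E, 0 ≤ x → 0 ≤ y → 0 ≤ x * y)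
    (hf_alg : ∀ x y z : E, x ⊓ y = 0 → 0 ≤ z → (x * z) ⊓ y = 0)
    (hDed : DedekindComplete E)
    {q x : E} {n : ℕ} (hn : n ≠ 0) (hq0 : 0 ≤ q) (hq1 : q ≤ 1)
    (hqc : q ⊓ (1 - q) = 0) (hx0 : 0 ≤ x)
    (hql : q ≤ x * q) (hqu : x * q ≤ n • q) :
    ∃ w : E, 0 ≤ w ∧ w ≤ q ∧ x * w = q := by
  set a : E := x * q with ha
  have ha0 : 0 ≤ a := hmul_pos x q hx0 hq0
  set dn : E → E := fun u => ((n : ℝ)⁻¹) • u with hdn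
  have hdiv : ∀ u : E, n • dn u = u := by
    intro u
    show n • (((n : ℝ)⁻¹) • u) = u
    rw [← Nat.cast_smul_eq_nsmul ℝ, smul_smul,
      mul_inv_cancel₀ (by exact_mod_cast hn), one_smul]
  have hinj : ∀ u v : E, n • u = n • v → u = v := by
    intro u v huv
    have e : ∀ w : E, dn (n • w) = w := by
      intro w
      show ((n : ℝ)⁻¹) • (n • w) = w
      rw [← Nat.cast_smul_eq_nsmul ℝ, smul_smul,
        inv_mul_cancel₀ (by exact_mod_cast hn), one_smul]
    rw [← e u, ← e v, huv]
  have hrefl : ∀ u v : E, n • u ≤ n • v → u ≤ v := fun u v h => fa_nsmul_le_cancel hn h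
  have hdn_nonneg : ∀ u : E, 0 ≤ u → 0 ≤ dn u := fun u hu =>
    fa_nonneg_of_nsmul hn (by rw [hdiv]; exact hu)
  set y : E := q - dn a with hy
  have hdna : dn a = q - y := by rw [hy]; ring
  have hy0 : 0 ≤ y := by
    apply hrefl
    rw [smul_zero, hy, smul_sub, hdiv]
    exact sub_nonneg.2 hqu
  have hyq : y ≤ q := sub_le_self _ (hdn_nonneg a ha0)
  -- the geometric sequence
  set z : ℕ → E := fun k => y ^ k * q with hzdef
  have hz0 : z 0 = q := by simp [hzdef]
  have hzsucc : ∀ k, z (k + 1) = y * z k := by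
    intro k; show y ^ (k+1) * q = y * (y ^ k * q); rw [pow_succ]; ring
  have hybnd : ∀ {w : E}, 0 ≤ w → w ≤ q → y * w ≤ y := by
    intro w hw0 hwq
    have h2 : y * w ≤ y * q := fa_mul_le hmul_pos hy0 hwq
    have h3 : y * q = y := by
      rw [mul_comm]; exact fa_absorb hmul_pos hf_alg hq1 hqc hy0 hyq
    rw [h3] at h2; exact h2
  have hznn : ∀ k, 0 ≤ z k ∧ z k ≤ q := by
    intro k
    induction k with
    | zero => rw [hz0]; exact ⟨hq0, le_rfl⟩
    | succ k ih =>
      rw [hzsucc]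
      exact ⟨hmul_pos _ _ hy0 ih.1, le_trans (hybnd ih.1 ih.2) hyq⟩
  have hqz : ∀ k, q * z k = z k := fun k =>
    fa_absorb hmul_pos hf_alg hq1 hqc (hznn k).1 (hznn k).2
  have hzanti : Antitone z := by
    apply antitone_nat_of_succ_le
    intro k
    rw [hzsucc]
    calc y * z k ≤ q * z k := fa_mul_le_right hmul_pos (hznn k).1 hyq
    _ = z k := hqz k
  set P : ℕ → E := fun K => ∑ k ∈ Finset.range K, z k with hP
  have hP0 : ∀ K, 0 ≤ P K := by
    intro K
    simp only [hP]
    exact fa_sum_nonneg fun k _ => (hznn k).1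
  have hkey : ∀ K, (q - y) * P K = q - z K := by
    intro K
    have e1 : (q - y) * P K = ∑ k ∈ Finset.range K, (z k - z (k + 1)) := by
      rw [hP, Finset.mul_sum]
      apply Finset.sum_congr rfl
      intro k _
      rw [sub_mul, hqz k, ← hzsucc]
    rw [e1, Finset.sum_range_sub' z K, hz0]
  have hnsmul_mul : ∀ (u v : E), n • (u * v) = (n • u) * v := by
    intro u v
    rw [nsmul_eq_mul n (u * v), nsmul_eq_mul n u]; ring
  have haP : ∀ K, a * dn (P K) = q - z K := by
    intro K
    apply hinj
    calc n • (a * dn (P K)) = n • (dn (P K) * a) := by rw [mul_comm]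
    _ = (n • dn (P K)) * a := hnsmul_mul _ _
    _ = P K * a := by rw [hdiv]
    _ = P K * (n • dn a) := by rw [hdiv]
    _ = (n • dn a) * P K := by rw [mul_comm]
    _ = n • (dn a * P K) := (hnsmul_mul _ _).symm
    _ = n • ((q - y) * P K) := by rw [hdna]
    _ = n • (q - z K) := by rw [hkey]
  have hsmono : Monotone fun K => dn (P K) := by
    apply monotone_nat_of_le_succ
    intro K
    apply hrefl
    rw [hdiv, hdiv, hP]
    show ∑ k ∈ Finset.range K, z k ≤ ∑ k ∈ Finset.range (K+1), z k
    rw [Finset.sum_range_succ]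
    exact le_add_of_nonneg_right (hznn K).1
  have hqdnP : ∀ K, q * dn (P K) = dn (P K) := by
    intro K
    apply hinj
    have e1 : q * P K = P K := by
      rw [hP, Finset.mul_sum]
      exact Finset.sum_congr rfl fun k _ => hqz k
    calc n • (q * dn (P K)) = n • (dn (P K) * q) := by rw [mul_comm]
    _ = (n • dn (P K)) * q := hnsmul_mul _ _
    _ = P K * q := by rw [hdiv]
    _ = P K := by rw [mul_comm]; exact e1
    _ = n • dn (P K) := (hdiv _).symm
  have hdnP_le_q : ∀ K, dn (P K) ≤ q := by
    intro K
    have h2 : q * dn (P K) ≤ a * dn (P K) := by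
      have := hmul_pos (a - q) (dn (P K)) (sub_nonneg.2 hql) (hdn_nonneg _ (hP0 K))
      rw [sub_mul] at this
      exact sub_nonneg.1 this
    calc dn (P K) = q * dn (P K) := (hqdnP K).symm
    _ ≤ a * dn (P K) := h2
    _ = q - z K := haP K
    _ ≤ q := sub_le_self q (hznn K).1
  obtain ⟨w, hw⟩ := hDed (Set.range fun K => dn (P K)) ⟨_, ⟨0, rfl⟩⟩
    ⟨q, by rintro _ ⟨K, rfl⟩; exact hdnP_le_q K⟩
  have hw_le_q : w ≤ q := hw.2 (by rintro _ ⟨K, rfl⟩; exact hdnP_le_q K)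
  have hdnP0 : dn (P 0) = 0 := by
    have : P 0 = 0 := by simp [hP]
    rw [this]; show ((n:ℝ)⁻¹) • (0:E) = 0; rw [smul_zero]
  have hw_nonneg : 0 ≤ w := by
    have h0 : dn (P 0) ≤ w := hw.1 ⟨0, rfl⟩
    rw [hdnP0] at h0; exact h0
  -- inf of z is 0
  have hdnzK : ∀ K, dn q * z K = dn (z K) := by
    intro K
    apply hinj
    calc n • (dn q * z K) = (n • dn q) * z K := hnsmul_mul _ _
    _ = q * z K := by rw [hdiv]
    _ = z K := hqz K
    _ = n • dn (z K) := (hdiv _).symm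
  have hstepz : ∀ K, dn (z K) ≤ z K - z (K + 1) := by
    intro K
    have hyle : y ≤ q - dn q := by
      apply hrefl
      have e1 : n • y = n • q - a := by
        calc n • y = n • (q - dn a) := by rw [hy]
        _ = n • q - n • dn a := by rw [smul_sub]
        _ = n • q - a := by rw [hdiv]
      have e2 : n • (q - dn q) = n • q - q := by
        calc n • (q - dn q) = n • q - n • dn q := by rw [smul_sub]
        _ = n • q - q := by rw [hdiv]
      rw [e1, e2]
      exact sub_le_sub_left hql _
    have h1 : z (K + 1) ≤ (q - dn q) * z K := by
      rw [hzsucc]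
      exact fa_mul_le_right hmul_pos (hznn K).1 hyle
    have h2 : (q - dn q) * z K = z K - dn (z K) := by
      rw [sub_mul, hqz, hdnzK]
    rw [h2] at h1
    exact le_sub_comm.1 h1
  have hzglb : IsGLB (Set.range z) 0 := by
    constructor
    · rintro _ ⟨K, rfl⟩; exact (hznn K).1
    · intro d hd
      have hMq : ∀ M : ℕ, M • dn (z M) ≤ q := by
        intro M
        have h1 : M • dn (z M) ≤ ∑ K ∈ Finset.range M, dn (z K) := by
          apply fa_nsmul_le_sum
          intro K hK
          apply hrefl
          rw [hdiv, hdiv]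
          exact hzanti (le_of_lt hK)
        have h2 : ∑ K ∈ Finset.range M, dn (z K) ≤ ∑ K ∈ Finset.range M, (z K - z (K+1)) :=
          fa_sum_le_sum M fun K _ => hstepz K
        rw [Finset.sum_range_sub' z M, hz0] at h2
        exact le_trans h1 (le_trans h2 (sub_le_self q (hznn M).1))
      have harch : ∀ M : ℕ, M • (d ⊔ 0) ≤ n • q := by
        intro M
        have hd0 : d ⊔ 0 ≤ z M := sup_le (hd ⟨M, rfl⟩) (hznn M).1
        calc M • (d ⊔ 0) ≤ M • z M := fa_nsmul_mono hd0 M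
        _ = M • (n • dn (z M)) := by rw [hdiv]
        _ = n • (M • dn (z M)) := by rw [smul_comm]
        _ ≤ n • q := fa_nsmul_mono (hMq M) n
      have := fa_arch hDed harch
      calc d ≤ d ⊔ 0 := le_sup_left
      _ ≤ 0 := this
  -- lower bound : q ≤ a * w
  have hlow : q ≤ a * w := by
    have h1 : ∀ K, q - a * w ≤ z K := by
      intro K
      have h2 : a * dn (P K) ≤ a * w := fa_mul_le hmul_pos ha0 (hw.1 ⟨K, rfl⟩)
      rw [haP K] at h2
      have h3 : q - a * w ≤ q - (q - z K) := sub_le_sub_left h2 q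
      simpa using h3
    have : q - a * w ∈ lowerBounds (Set.range z) := by rintro _ ⟨K, rfl⟩; exact h1 K
    exact sub_nonpos.1 (hzglb.2 this)
  -- upper bound : a * w ≤ q
  have hupp : a * w ≤ q := by
    set t : ℕ → E := fun K => w - dn (P K) with ht
    have htanti : Antitone t := fun i j hij => sub_le_sub_left (hsmono hij) w
    have htglb : IsGLB (Set.range t) 0 := fa_glb_sub hw
    have htq : ∀ K, 0 ≤ t K ∧ t K ≤ q := fun K =>
      ⟨sub_nonneg.2 (hw.1 ⟨K, rfl⟩),
        le_trans (sub_le_self w (hdn_nonneg _ (hP0 K))) hw_le_q⟩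
    have hbound : ∀ K, a * w - q ≤ n • t K := by
      intro K
      have h1 : a * t K ≤ (n • q) * t K := by
        have := hmul_pos (n • q - a) (t K) (sub_nonneg.2 hqu) (htq K).1
        rw [sub_mul] at this
        exact sub_nonneg.1 this
      have h2 : (n • q) * t K = n • t K := by
        rw [← hnsmul_mul]
        rw [fa_absorb hmul_pos hf_alg hq1 hqc (htq K).1 (htq K).2]
      have h3 : a * w - q ≤ a * w - a * dn (P K) := by
        have := haP K
        have h4 : q - z K ≤ q := sub_le_self q (hznn K).1
        rw [← this] at h4
        exact sub_le_sub_left h4 _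
      have h5 : a * w - a * dn (P K) = a * t K := by rw [ht]; ring
      rw [h5] at h3
      rw [h2] at h1
      exact le_trans h3 h1
    exact sub_nonpos.1 (fa_le_zero_of_le_nsmul htanti htglb n hbound)
  have haw : a * w = q := le_antisymm hupp hlow
  refine ⟨w, hw_nonneg, hw_le_q, ?_⟩
  have hqw : q * w = w := fa_absorb hmul_pos hf_alg hq1 hqc hw_nonneg hw_le_q
  calc x * w = x * (q * w) := by rw [hqw]
  _ = (x * q) * w := by ring
  _ = q := haw

/-- Main inversion: in such an f-algebra, every `x ≥ 1` has an inverse `v` with `0 ≤ v ≤ 1`. -/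
private lemma fa_exists_inv (hmul_pos : ∀ x y : E, 0 ≤ x → 0 ≤ y → 0 ≤ x * y)
    (hf_alg : ∀ x y z : E, x ⊓ y = 0 → 0 ≤ z → (x * z) ⊓ y = 0)
    (hDed : DedekindComplete E) (h1_pos : (0 : E) ≤ 1)
    (h1_unit : ∀ x : E, 0 ≤ x → x ⊓ 1 = 0 → x = 0)
    {x : E} (hx1 : (1 : E) ≤ x) : ∃ v : E, x * v = 1 ∧ 0 ≤ v ∧ v ≤ 1 := by
  have hx0 : 0 ≤ x := le_trans h1_pos hx1
  -- band projections of 1 onto the bands generated by (x - N•1)⁺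
  have hpex : ∀ N : ℕ, ∃ p, IsLUB (Set.range fun k : ℕ => (1:E) ⊓ k • (x - N • (1:E))⁺) p := by
    intro N
    exact hDed _ ⟨_, ⟨0, rfl⟩⟩ ⟨1, by rintro _ ⟨k, rfl⟩; exact inf_le_left⟩
  choose p hp using hpex
  have hmem : ∀ N k : ℕ, (1:E) ⊓ k • (x - N • (1:E))⁺ ≤ p N := fun N k => (hp N).1 ⟨k, rfl⟩
  have hp0 : ∀ N, 0 ≤ p N := by
    intro N
    have := hmem N 0
    simpa [inf_eq_right.2 h1_pos] using this
  have hp1 : ∀ N, p N ≤ 1 := fun N => (hp N).2 (by rintro _ ⟨k, rfl⟩; exact inf_le_left)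
  have hbanti : ∀ N : ℕ, (x - (N+1) • (1:E))⁺ ≤ (x - N • (1:E))⁺ := by
    intro N
    apply posPart_mono
    have : N • (1:E) ≤ (N+1) • (1:E) := by
      rw [succ_nsmul]; exact le_add_of_nonneg_right h1_pos
    exact sub_le_sub_left this x
  have hpanti : Antitone p := by
    apply antitone_nat_of_succ_le
    intro N
    apply (hp (N+1)).2
    rintro _ ⟨k, rfl⟩
    exact le_trans (inf_le_inf_left 1 (fa_nsmul_mono (hbanti N) k)) (hmem N k)
  have hp0eq : p 0 = 1 := by
    refine le_antisymm (hp1 0) ?_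
    have h1 : (1:E) ⊓ 1 • (x - 0 • (1:E))⁺ = 1 := by
      rw [zero_smul, sub_zero, one_smul, posPart_eq_self.2 hx0]
      exact inf_eq_left.2 hx1
    have := hmem 0 1
    rwa [h1] at this
  -- disjointness of 1 - p N and (x - N•1)⁺
  have hdisj : ∀ N, (1 - p N) ⊓ (x - N • (1:E))⁺ = 0 := by
    intro N
    set β : E := (x - N • (1:E))⁺ with hβ
    set h : E := (1 - p N) ⊓ β with hh
    have hh0 : 0 ≤ h := le_inf (sub_nonneg.2 (hp1 N)) (posPart_nonneg _)
    have hk : ∀ k : ℕ, (1:E) ⊓ k • β + h ≤ p N := by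
      intro k
      have s1 : (1:E) ⊓ k • β + h ≤ 1 := by
        have : h ≤ 1 - ((1:E) ⊓ k • β) := by
          calc h ≤ 1 - p N := inf_le_left
          _ ≤ 1 - ((1:E) ⊓ k • β) := sub_le_sub_left (hmem N k) 1
        calc (1:E) ⊓ k • β + h ≤ (1:E) ⊓ k • β + (1 - ((1:E) ⊓ k • β)) :=
          add_le_add_right this _
        _ = 1 := by ring
      have s2 : (1:E) ⊓ k • β + h ≤ (k+1) • β := by
        rw [succ_nsmul]
        exact add_le_add inf_le_right inf_le_right
      exact le_trans (le_inf s1 s2) (hmem N (k+1))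
    have hple : p N ≤ p N - h := by
      apply (hp N).2
      rintro _ ⟨k, rfl⟩
      exact le_sub_iff_add_le.2 (hk k)
    have : h ≤ 0 := by
      have h2 : p N + h ≤ p N := by
        have := add_le_add_left hple h
        calc p N + h = h + p N := by ring
        _ ≤ h + (p N - h) := add_le_add_right hple h
        _ = p N := by ring
      exact (add_le_iff_nonpos_right (p N)).1 h2
    exact le_antisymm this hh0
  -- each p N is a component of 1
  have hcomp : ∀ N, p N ⊓ (1 - p N) = 0 := by
    intro N
    set β : E := (x - N • (1:E))⁺ with hβ
    set r : E := p N ⊓ (1 - p N) with hr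
    have hr0 : 0 ≤ r := le_inf (hp0 N) (sub_nonneg.2 (hp1 N))
    have hrβ : r ⊓ β = 0 := by
      refine le_antisymm ?_ (le_inf hr0 (posPart_nonneg _))
      calc r ⊓ β ≤ (1 - p N) ⊓ β := inf_le_inf_right β inf_le_right
      _ = 0 := hdisj N
    have hrkβ : ∀ k : ℕ, r ⊓ k • β = 0 := by
      intro k
      rw [inf_comm]
      exact fa_disj_nsmul (posPart_nonneg _) hr0 (by rw [inf_comm]; exact hrβ) k
    have himg : IsLUB ((fun u => u ⊓ r) '' (Set.range fun k : ℕ => (1:E) ⊓ k • β)) (p N ⊓ r) :=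
      fa_isLUB_inf r (hp N)
    have hub : p N ⊓ r ≤ 0 := by
      apply himg.2
      rintro _ ⟨_, ⟨k, rfl⟩, rfl⟩
      have : ((1:E) ⊓ k • β) ⊓ r ≤ r ⊓ k • β := by
        rw [inf_comm]
        exact inf_le_inf_left r inf_le_right
      rw [hrkβ k] at this
      exact this
    have : r ≤ 0 := by
      calc r = r ⊓ p N := (inf_eq_left.2 inf_le_left).symm
      _ = p N ⊓ r := inf_comm _ _
      _ ≤ 0 := hub
    exact le_antisymm this hr0
  -- p N is killed by (x - N•1)⁻ as well
  have hdisjneg : ∀ N, p N ⊓ (x - N • (1:E))⁻ = 0 := by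
    intro N
    set β : E := (x - N • (1:E))⁺ with hβ
    set γ : E := (x - N • (1:E))⁻ with hγ
    have hβγ : β ⊓ γ = 0 := posPart_inf_negPart_eq_zero _
    have himg : IsLUB ((fun u => u ⊓ γ) '' (Set.range fun k : ℕ => (1:E) ⊓ k • β)) (p N ⊓ γ) :=
      fa_isLUB_inf γ (hp N)
    refine le_antisymm ?_ (le_inf (hp0 N) (negPart_nonneg _))
    apply himg.2
    rintro _ ⟨_, ⟨k, rfl⟩, rfl⟩
    have h1 : (k • β) ⊓ γ = 0 := fa_disj_nsmul (posPart_nonneg _) (negPart_nonneg _) hβγ k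
    have : ((1:E) ⊓ k • β) ⊓ γ ≤ (k • β) ⊓ γ := inf_le_inf_right γ inf_le_right
    rw [h1] at this
    exact this
  -- N • p N ≤ x
  have hpbound : ∀ N : ℕ, N • p N ≤ x := by
    intro N
    have h1 : p N * (x - N • (1:E))⁻ = 0 :=
      fa_mul_eq_zero hf_alg (hp0 N) (negPart_nonneg _) (hdisjneg N)
    have h2 : p N * (N • (1:E)) ≤ p N * x := by
      have e : p N * (x - N • (1:E)) = p N * (x - N • (1:E))⁺ - p N * (x - N • (1:E))⁻ := by
        rw [← mul_sub, posPart_sub_negPart]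
      have h3 : 0 ≤ p N * (x - N • (1:E)) := by
        rw [e, h1, sub_zero]
        exact hmul_pos _ _ (hp0 N) (posPart_nonneg _)
      rw [mul_sub] at h3
      exact sub_nonneg.1 h3
    have h4 : p N * (N • (1:E)) = N • p N := by
      rw [nsmul_eq_mul N (1:E), nsmul_eq_mul N (p N)]; ring
    have h5 : p N * x ≤ x := by
      have := fa_mul_le hmul_pos hx0 (hp1 N)
      rw [mul_one] at this
      calc p N * x = x * p N := by ring
      _ ≤ x := this
    rw [h4] at h2
    exact le_trans h2 h5
  have hpglb : IsGLB (Set.range p) 0 := by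
    constructor
    · rintro _ ⟨N, rfl⟩; exact hp0 N
    · intro d hd
      have harch : ∀ N : ℕ, N • (d ⊔ 0) ≤ x := by
        intro N
        have : d ⊔ 0 ≤ p N := sup_le (hd ⟨N, rfl⟩) (hp0 N)
        exact le_trans (fa_nsmul_mono this N) (hpbound N)
      have := fa_arch hDed harch
      calc d ≤ d ⊔ 0 := le_sup_left
      _ ≤ 0 := this
  -- the pieces q n = p (n-1) - p n  (indexed so that piece n+1 uses p n - p (n+1))
  set q : ℕ → E := fun n => p n - p (n + 1) with hq
  have hq0 : ∀ n, 0 ≤ q n := fun n => sub_nonneg.2 (hpanti (Nat.le_succ n))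
  have hq1 : ∀ n, q n ≤ 1 := fun n =>
    le_trans (sub_le_self _ (hp0 (n+1))) (hp1 n)
  have hqcomp : ∀ n, q n ⊓ (1 - q n) = 0 := by
    intro n
    have e : (1:E) - q n = (1 - p n) + p (n+1) := by rw [hq]; ring
    have h1 : q n ⊓ ((1 - p n) + p (n+1)) ≤ (1 - p n) ⊓ q n + p (n+1) ⊓ q n := by
      rw [inf_comm]
      exact fa_inf_add_le (sub_nonneg.2 (hp1 n)) (hp0 (n+1)) (hq0 n)
    have h2 : (1 - p n) ⊓ q n ≤ 0 := by
      have hle : q n ≤ p n := by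
        show p n - p (n+1) ≤ p n
        exact sub_le_self _ (hp0 (n+1))
      calc (1 - p n) ⊓ q n ≤ (1 - p n) ⊓ p n := inf_le_inf_left _ hle
      _ = p n ⊓ (1 - p n) := inf_comm _ _
      _ = 0 := hcomp n
    have h3 : p (n+1) ⊓ q n ≤ 0 := by
      have hle : q n ≤ 1 - p (n+1) := by
        rw [hq]
        exact sub_le_sub_right (hp1 n) _
      have : p (n+1) ⊓ q n ≤ p (n+1) ⊓ (1 - p (n+1)) := inf_le_inf_left _ hle
      rw [hcomp (n+1)] at this
      exact this
    refine le_antisymm ?_ (le_inf (hq0 n) (sub_nonneg.2 (hq1 n)))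
    rw [e]
    calc q n ⊓ ((1 - p n) + p (n+1)) ≤ (1 - p n) ⊓ q n + p (n+1) ⊓ q n := h1
    _ ≤ 0 + 0 := add_le_add h2 h3
    _ = 0 := by ring
  -- bounds for x * q n
  have hxq_low : ∀ n, q n ≤ x * q n := by
    intro n
    have := hmul_pos (x - 1) (q n) (sub_nonneg.2 hx1) (hq0 n)
    rw [sub_mul, one_mul] at this
    exact sub_nonneg.1 this
  have hxq_up : ∀ n : ℕ, x * q n ≤ (n + 1) • q n := by
    intro n
    have hqβ : q n ⊓ (x - (n+1) • (1:E))⁺ = 0 := by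
      refine le_antisymm ?_ (le_inf (hq0 n) (posPart_nonneg _))
      have hle : q n ≤ 1 - p (n+1) := by
        rw [hq]; exact sub_le_sub_right (hp1 n) _
      calc q n ⊓ (x - (n+1) • (1:E))⁺ ≤ (1 - p (n+1)) ⊓ (x - (n+1) • (1:E))⁺ :=
        inf_le_inf_right _ hle
      _ = 0 := hdisj (n+1)
    have h1 : q n * (x - (n+1) • (1:E))⁺ = 0 :=
      fa_mul_eq_zero hf_alg (hq0 n) (posPart_nonneg _) hqβ
    have h2 : q n * (x - (n+1) • (1:E)) ≤ 0 := by
      have e : q n * (x - (n+1) • (1:E)) =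
          q n * (x - (n+1) • (1:E))⁺ - q n * (x - (n+1) • (1:E))⁻ := by
        rw [← mul_sub, posPart_sub_negPart]
      rw [e, h1, zero_sub]
      exact neg_nonpos.2 (hmul_pos _ _ (hq0 n) (negPart_nonneg _))
    rw [mul_sub] at h2
    have h3 : q n * x ≤ q n * ((n+1) • (1:E)) := sub_nonpos.1 h2
    have h4 : q n * ((n+1) • (1:E)) = (n+1) • q n := by
      rw [nsmul_eq_mul (n+1) (1:E), nsmul_eq_mul (n+1) (q n)]; ring
    rw [h4] at h3
    calc x * q n = q n * x := by ring
    _ ≤ (n+1) • q n := h3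
  -- piece inverses
  have hwex : ∀ n : ℕ, ∃ w : E, 0 ≤ w ∧ w ≤ q n ∧ x * w = q n := fun n =>
    fa_piece_inv hmul_pos hf_alg hDed (Nat.succ_ne_zero n) (hq0 n) (hq1 n) (hqcomp n)
      hx0 (hxq_low n) (hxq_up n)
  choose w hw0 hwq hxw using hwex
  -- partial sums
  set V : ℕ → E := fun N => ∑ n ∈ Finset.range N, w n with hV
  have hV0 : ∀ N, 0 ≤ V N := by
    intro N; simp only [hV]; exact fa_sum_nonneg fun n _ => hw0 n
  have hVmono : Monotone V := by
    apply monotone_nat_of_le_succ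
    intro N
    simp only [hV]
    rw [Finset.sum_range_succ]
    exact le_add_of_nonneg_right (hw0 N)
  have hxV : ∀ N, x * V N = 1 - p N := by
    intro N
    simp only [hV]
    rw [Finset.mul_sum]
    have e1 : ∀ n ∈ Finset.range N, x * w n = p n - p (n+1) := by
      intro n _
      rw [hxw n, hq]
    rw [Finset.sum_congr rfl e1, Finset.sum_range_sub' p N, hp0eq]
  have hVle1 : ∀ N, V N ≤ 1 := by
    intro N
    have h1 : V N ≤ x * V N := by
      have := hmul_pos (x - 1) (V N) (sub_nonneg.2 hx1) (hV0 N)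
      rw [sub_mul, one_mul] at this
      exact sub_nonneg.1 this
    rw [hxV N] at h1
    exact le_trans h1 (sub_le_self _ (hp0 N))
  obtain ⟨v, hv⟩ := hDed (Set.range V) ⟨V 0, ⟨0, rfl⟩⟩
    ⟨1, by rintro _ ⟨N, rfl⟩; exact hVle1 N⟩
  have hv1 : v ≤ 1 := hv.2 (by rintro _ ⟨N, rfl⟩; exact hVle1 N)
  have hv0 : 0 ≤ v := le_trans (hV0 0) (hv.1 ⟨0, rfl⟩)
  -- x * v ≥ 1
  have hlow : 1 ≤ x * v := by
    have h1 : ∀ N, 1 - x * v ≤ p N := by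
      intro N
      have h2 : x * V N ≤ x * v := fa_mul_le hmul_pos hx0 (hv.1 ⟨N, rfl⟩)
      rw [hxV N] at h2
      calc 1 - x * v ≤ 1 - (1 - p N) := sub_le_sub_left h2 1
      _ = p N := by ring
    have : 1 - x * v ∈ lowerBounds (Set.range p) := by rintro _ ⟨N, rfl⟩; exact h1 N
    exact sub_nonpos.1 (hpglb.2 this)
  -- x * v ≤ 1
  have hupp : x * v ≤ 1 := by
    set t : ℕ → E := fun N => v - V N with ht
    have htanti : Antitone t := fun i j hij => sub_le_sub_left (hVmono hij) v
    have htglb : IsGLB (Set.range t) 0 := fa_glb_sub hv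
    have ht0 : ∀ N, 0 ≤ t N := fun N => sub_nonneg.2 (hv.1 ⟨N, rfl⟩)
    have ht1 : ∀ N, t N ≤ 1 := fun N => le_trans (sub_le_self v (hV0 N)) hv1
    have hbound : ∀ K : ℕ, ∀ N, x * v - 1 - (x - x ⊓ K • (1:E)) ≤ K • t N := by
      intro K N
      have s1 : (x ⊓ K • (1:E)) * t N ≤ K • t N := by
        have h1 : (x ⊓ K • (1:E)) * t N ≤ (K • (1:E)) * t N :=
          fa_mul_le_right hmul_pos (ht0 N) inf_le_right
        have h2 : (K • (1:E)) * t N = K • t N := by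
          rw [nsmul_eq_mul K (1:E), nsmul_eq_mul K (t N)]; ring
        rw [h2] at h1; exact h1
      have s2 : (x - x ⊓ K • (1:E)) * t N ≤ x - x ⊓ K • (1:E) := by
        have h1 : 0 ≤ x - x ⊓ K • (1:E) := sub_nonneg.2 inf_le_left
        have := fa_mul_le hmul_pos h1 (ht1 N)
        rw [mul_one] at this
        exact this
      have s3 : x * t N ≤ (x - x ⊓ K • (1:E)) + K • t N := by
        calc x * t N = (x - x ⊓ K • (1:E)) * t N + (x ⊓ K • (1:E)) * t N := by ring
        _ ≤ (x - x ⊓ K • (1:E)) + K • t N := add_le_add s2 s1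
      have s4 : x * v = x * V N + x * t N := by rw [ht]; ring
      have s5 : x * v ≤ 1 + (x - x ⊓ K • (1:E)) + K • t N := by
        rw [s4, hxV N]
        have s5a : 1 - p N + x * t N ≤ 1 + x * t N :=
          add_le_add_left (sub_le_self _ (hp0 N)) _
        calc 1 - p N + x * t N ≤ 1 + x * t N := s5a
        _ ≤ 1 + ((x - x ⊓ K • (1:E)) + K • t N) := add_le_add_right s3 1
        _ = 1 + (x - x ⊓ K • (1:E)) + K • t N := by ring
      have s6 : x * v - 1 - (x - x ⊓ K • (1:E)) ≤
          (1 + (x - x ⊓ K • (1:E)) + K • t N) - 1 - (x - x ⊓ K • (1:E)) :=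
        sub_le_sub_right (sub_le_sub_right s5 1) _
      exact le_trans s6 (le_of_eq (by ring))
    have hK : ∀ K : ℕ, x * v - 1 ≤ x - x ⊓ K • (1:E) := by
      intro K
      have := fa_le_zero_of_le_nsmul htanti htglb K (hbound K)
      exact sub_nonpos.1 this
    have htrunc := fa_glb_trunc hDed h1_pos h1_unit hx0
    have : x * v - 1 ∈ lowerBounds (Set.range fun K : ℕ => x - x ⊓ (K • (1:E))) := by
      rintro _ ⟨K, rfl⟩; exact hK K
    exact sub_nonpos.1 (htrunc.2 this)
  exact ⟨v, le_antisymm hupp hlow, hv0, hv1⟩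

end FAlgebraAux

/-- Theorem. Let `E` be a universally complete `f`-algebra whose multiplicative identity
`e = 1` is a weak order unit.  Let `(x_n)_{n ≥ 1}` be a sequence in `E⁺` and
`R_n = ∑_{i=1}^n x_i`.  Then each `e + R_n` has a multiplicative inverse `v n` in `E`
with `0 ≤ v n ≤ e`, the series `∑ x_n (e + R_n)⁻²` converges in order in `E`, and its
sum is at most `e`. -/
theorem falgebra_sum_xn_inv_sq_le_one
    {E : Type*} [Lattice E] [CommRing E] [Module ℝ E]
    [CovariantClass E E (· + ·) (· ≤ ·)]
    -- `E` is a lattice-ordered algebra: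
    (hmul_pos : ∀ x y : E, 0 ≤ x → 0 ≤ y → 0 ≤ x * y)
    -- the `f`-algebra property:
    (hf_alg : ∀ x y z : E, x ⊓ y = 0 → 0 ≤ z → (x * z) ⊓ y = 0)
    -- `E` is universally complete:
    (hDed : DedekindComplete E) (hLat : LaterallyComplete E)
    -- the identity `e = 1` is a positive weak order unit:
    (h1_pos : (0 : E) ≤ 1) (h1_unit : ∀ x : E, 0 ≤ x → x ⊓ 1 = 0 → x = 0)
    (x : ℕ → E) (hx : ∀ n, 0 ≤ x n) :
    ∃ v : ℕ → E,
      (∀ n, (1 + ∑ i ∈ Finset.Icc 1 n, x i) * v n = 1 ∧ 0 ≤ v n ∧ v n ≤ 1) ∧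
      ∃ s : E, s ≤ 1 ∧
        OrderConvSeq (fun N => ∑ n ∈ Finset.Icc 1 N, x n * (v n) ^ 2) s := by
  have hvex : ∀ n : ℕ, ∃ v : E, (1 + ∑ i ∈ Finset.Icc 1 n, x i) * v = 1 ∧ 0 ≤ v ∧ v ≤ 1 := by
    intro n
    apply fa_exists_inv hmul_pos hf_alg hDed h1_pos h1_unit
    have : (0:E) ≤ ∑ i ∈ Finset.Icc 1 n, x i := fa_sum_nonneg fun i _ => hx i
    exact le_add_of_nonneg_right this
  choose v hv1 hv2 hv3 using hvex
  refine ⟨v, fun n => ⟨hv1 n, hv2 n, hv3 n⟩, ?_⟩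
  have hv0 : v 0 = 1 := by
    have := hv1 0
    rwa [show Finset.Icc 1 0 = (∅ : Finset ℕ) from Finset.Icc_eq_empty (by omega),
      Finset.sum_empty, add_zero, one_mul] at this
  have hRstep : ∀ n : ℕ, ∑ i ∈ Finset.Icc 1 (n+1), x i = (∑ i ∈ Finset.Icc 1 n, x i) + x (n+1) :=
    fun n => Finset.sum_Icc_succ_top (by omega) x
  have hkey : ∀ n : ℕ, v n - v (n+1) = v n * v (n+1) * x (n+1) := by
    intro n
    have e1 := hv1 n
    have e2 := hv1 (n+1)
    calc v n - v (n+1)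
        = v n * ((1 + ∑ i ∈ Finset.Icc 1 (n+1), x i) * v (n+1))
          - ((1 + ∑ i ∈ Finset.Icc 1 n, x i) * v n) * v (n+1) := by rw [e1, e2]; ring
    _ = v n * v (n+1) * ((∑ i ∈ Finset.Icc 1 (n+1), x i) - ∑ i ∈ Finset.Icc 1 n, x i) := by
        ring
    _ = v n * v (n+1) * x (n+1) := by rw [hRstep n]; ring
  have hvmono : ∀ n : ℕ, v (n+1) ≤ v n := by
    intro n
    have h2 : 0 ≤ v n * v (n+1) * x (n+1) :=
      hmul_pos _ _ (hmul_pos _ _ (hv2 n) (hv2 (n+1))) (hx (n+1))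
    rw [← hkey n] at h2
    exact sub_nonneg.1 h2
  have hterm : ∀ n : ℕ, x (n+1) * v (n+1) ^ 2 ≤ v n - v (n+1) := by
    intro n
    have hc : 0 ≤ x (n+1) * v (n+1) := hmul_pos _ _ (hx (n+1)) (hv2 (n+1))
    have h2 : (x (n+1) * v (n+1)) * v (n+1) ≤ (x (n+1) * v (n+1)) * v n :=
      fa_mul_le hmul_pos hc (hvmono n)
    calc x (n+1) * v (n+1) ^ 2 = (x (n+1) * v (n+1)) * v (n+1) := by ring
    _ ≤ (x (n+1) * v (n+1)) * v n := h2
    _ = v n - v (n+1) := by rw [hkey n]; ring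
  set S : ℕ → E := fun N => ∑ n ∈ Finset.Icc 1 N, x n * (v n) ^ 2 with hS
  have hSstep : ∀ N, S (N+1) = S N + x (N+1) * (v (N+1)) ^ 2 := by
    intro N
    simp only [hS]
    exact Finset.sum_Icc_succ_top (by omega) _
  have hSmono : Monotone S := by
    apply monotone_nat_of_le_succ
    intro N
    rw [hSstep]
    have : (0:E) ≤ x (N+1) * (v (N+1)) ^ 2 := by
      have := hmul_pos _ _ (hx (N+1)) (hmul_pos _ _ (hv2 (N+1)) (hv2 (N+1)))
      calc (0:E) ≤ x (N+1) * (v (N+1) * v (N+1)) := this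
      _ = x (N+1) * (v (N+1)) ^ 2 := by ring
    exact le_add_of_nonneg_right this
  have hSle : ∀ N, S N ≤ 1 - v N := by
    intro N
    induction N with
    | zero =>
      have : S 0 = 0 := by
        simp only [hS]
        rw [show Finset.Icc 1 0 = (∅ : Finset ℕ) from Finset.Icc_eq_empty (by omega),
          Finset.sum_empty]
      rw [this, hv0, sub_self]
    | succ N ih =>
      rw [hSstep]
      calc S N + x (N+1) * (v (N+1)) ^ 2 ≤ (1 - v N) + (v N - v (N+1)) :=
        add_le_add ih (hterm N)
      _ = 1 - v (N+1) := by ring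
  have hS1 : ∀ N, S N ≤ 1 := fun N => le_trans (hSle N) (sub_le_self 1 (hv2 N))
  obtain ⟨s, hs⟩ := hDed (Set.range S) ⟨S 0, ⟨0, rfl⟩⟩
    ⟨1, by rintro _ ⟨N, rfl⟩; exact hS1 N⟩
  refine ⟨s, hs.2 (by rintro _ ⟨N, rfl⟩; exact hS1 N), ?_⟩
  refine ⟨fun m => s - S m, ?_, fa_glb_sub hs, ?_⟩
  · intro i j hij
    exact sub_le_sub_left (hSmono hij) s
  · intro m
    refine ⟨m, fun n hn => ?_⟩
    have h1 : S n - s ≤ 0 := sub_nonpos.2 (hs.1 ⟨n, rfl⟩)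
    rw [abs_of_nonpos h1]
    have h2 : s - S n ≤ s - S m := sub_le_sub_left (hSmono hn) s
    calc -(S n - s) = s - S n := by ring
    _ ≤ s - S m := h2
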